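/- Let y be a string over an alphabet Σ. For any characters a, b ∈ Σ and any string x ∈ Σ*, if a·x·b is a minimal absent word of y, then x ∈ Substr(y) and x = Rrep_y(x), i.e., x is the longest string w with EndPos_y(w) = EndPos_y(x). -/

import Mathlib

open List

/-- 1-indexed beginning positions of occurrences of `x` in `y`:
`BegPos y x = { i | 1 ≤ i ≤ |y| - |x| + 1, y[i..i+|x|-1] = x }`. -/
def BegPos {α : Type*} (y x : List α) : Set ℕ :=
  {i | 1 ≤ i ∧ i ≤ y.length - x.length + 1 ∧ x <+: y.drop (i - 1)}

/-- 1-indexed ending positions of occurrences of `x` in `y`: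
`EndPos y x = { i | |x| ≤ i ≤ |y|, y[i-|x|+1..i] = x }`. -/
def EndPos {α : Type*} (y x : List α) : Set ℕ :=
  {i | x.length ≤ i ∧ i ≤ y.length ∧ x <:+ y.take i}

/-- `IsLrepOf y w x` means `w = Lrep_y(x)`: `w` is left-equivalent to `x` in `y`
(`BegPos y w = BegPos y x`) and is the longest such string. -/
def IsLrepOf {α : Type*} (y w x : List α) : Prop :=
  BegPos y w = BegPos y x ∧ ∀ v : List α, BegPos y v = BegPos y x → v.length ≤ w.length

/-- `IsRrepOf y w x` means `w = Rrep_y(x)`: `w` is right-equivalent to `x` in `y`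
(`EndPos y w = EndPos y x`) and is the longest such string. -/
def IsRrepOf {α : Type*} (y w x : List α) : Prop :=
  EndPos y w = EndPos y x ∧ ∀ v : List α, EndPos y v = EndPos y x → v.length ≤ w.length

/-- `x` is a minimal absent word of `y`: `x` is not a substring of `y` and
every proper substring of `x` is a substring of `y`. -/
def IsMAW {α : Type*} (y x : List α) : Prop :=
  ¬ x <:+: y ∧ ∀ w : List α, w <:+: x → w ≠ x → w <:+: y

theorem maw_inner_is_rrep {α : Type*} (y : List α) (a b : α) (x : List α)
    (h : IsMAW y (a :: (x ++ [b]))) :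
    x <:+: y ∧ IsRrepOf y x x := by
  obtain ⟨hNot, hSub⟩ := h
  have hx : x <:+: y := by
    apply hSub x ⟨[a], [b], by simp⟩
    intro e; have := congrArg length e
    simp only [length_cons, length_append, length_singleton] at this; omega
  have hax : (a :: x) <:+: y := by
    apply hSub _ ⟨[], [b], by simp⟩
    intro e; have := congrArg length e
    simp only [length_cons, length_append, length_singleton] at this; omega
  have hxb : (x ++ [b]) <:+: y := by
    apply hSub _ ⟨[a], [], by simp⟩
    intro e; have := congrArg length e
    simp only [length_cons, length_append, length_singleton] at this; omega
  refine ⟨hx, rfl, ?_⟩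
  intro v hv
  by_contra hlen
  push_neg at hlen
  obtain ⟨s, t, hst⟩ := hax
  obtain ⟨s', t', hst'⟩ := hxb
  have hy : y = (s ++ a :: x) ++ t := by rw [← hst]
  have hy' : y = (s' ++ x) ++ ([b] ++ t') := by rw [← hst']; simp
  have htake : y.take (s ++ a :: x).length = s ++ a :: x := by
    rw [hy]; exact List.take_left
  have hi : (s ++ a :: x).length ∈ EndPos y x := by
    refine ⟨by simp only [length_append, length_cons]; omega, ?_, ?_⟩
    · rw [hy]; simp only [length_append]; omega
    · rw [htake]; exact (List.suffix_cons a x).trans (List.suffix_append _ _)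
  have hiv : (s ++ a :: x).length ∈ EndPos y v := by rw [hv]; exact hi
  have hvsuf : v <:+ s ++ a :: x := by rw [← htake]; exact hiv.2.2
  have haxs : (a :: x) <:+ s ++ a :: x := List.suffix_append _ _
  have haxv : (a :: x) <:+ v := by
    rcases List.suffix_or_suffix_of_suffix haxs hvsuf with h1 | h1
    · exact h1
    · have : v = a :: x := List.IsSuffix.eq_of_length h1 (by
        have := h1.length_le; simp only [length_cons] at this ⊢; omega)
      rw [this]
  have htake' : y.take (s' ++ x).length = s' ++ x := by
    rw [hy']; exact List.take_left
  have hj : (s' ++ x).length ∈ EndPos y x := by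
    refine ⟨by simp, ?_, ?_⟩
    · rw [hy']; simp only [length_append]; omega
    · rw [htake']; exact List.suffix_append _ _
  have hjv : (s' ++ x).length ∈ EndPos y v := by rw [hv]; exact hj
  have hvsuf' : v <:+ s' ++ x := by rw [← htake']; exact hjv.2.2
  obtain ⟨p, hp⟩ := haxv.trans hvsuf'
  refine hNot ⟨p, t', ?_⟩
  have h2 : p ++ (a :: (x ++ [b])) ++ t' = (p ++ a :: x) ++ ([b] ++ t') := by simp
  rw [h2, hp, ← hy']
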